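/- If the sample measures satisfy the fibered mixing hypothesis (II), then for all n ≥ 1, g ≥ 1 and every A ∈ F₀ⁿ(X): |μ(A ∩ σ^{−g−n}A) − μ(A)²| ≤ α(g) + |∫_Ω (μ_ω(A) − μ(A))·(μ_{θ^{n+g}ω}(A) − μ(A)) dℙ(ω)|. -/

import Mathlib

open MeasureTheory Filter ProbabilityTheory Set

noncomputable section

/-- The one-sided shift on `ℕ`-indexed sequences. -/
def shiftN {A : Type*} (x : ℕ → A) : ℕ → A := fun n => x (n + 1)

/-- The `k`-cylinder determined by the word `w`. -/
def cyl {A : Type*} (k : ℕ) (w : Fin k → A) : Set (ℕ → A) := {x | ∀ i : Fin k, x (i : ℕ) = w i}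

/-- Membership in the σ-algebra `F₀ⁿ(X)` generated by the `n`-cylinders:
the sets determined by the first `n` coordinates. -/
def cylAlg {A : Type*} (n : ℕ) (B : Set (ℕ → A)) : Prop :=
  ∃ s : Set (Fin n → A), B = {x | (fun i : Fin n => x (i : ℕ)) ∈ s}

/-- Length of the longest common substring of `x` and `y` within the first `n` symbols:
`M_n(x,y) = max{m : x_{i+k} = y_{j+k}, k = 1,…,m, for some 0 ≤ i,j ≤ n-m}`. -/
def Mstat {A : Type*} (x y : ℕ → A) (n : ℕ) : ℕ :=
  sSup {m | ∃ i j : ℕ, i + m ≤ n ∧ j + m ≤ n ∧ ∀ k, 1 ≤ k → k ≤ m → x (i + k) = y (j + k)}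

/-- Lower Rényi entropy `H̲₂(μ) = liminf_k (-1/k) log Σ_{C_k} μ(C_k)²`. -/
def H2low (N : ℕ) (μ : Measure (ℕ → Fin N)) : ℝ :=
  liminf (fun k : ℕ =>
    Real.log (∑ w : Fin k → Fin N, (μ (cyl k w)).toReal ^ 2) / (-(k : ℝ))) atTop

/-- Upper Rényi entropy `H̄₂(μ) = limsup_k (-1/k) log Σ_{C_k} μ(C_k)²`. -/
def H2up (N : ℕ) (μ : Measure (ℕ → Fin N)) : ℝ :=
  limsup (fun k : ℕ =>
    Real.log (∑ w : Fin k → Fin N, (μ (cyl k w)).toReal ^ 2) / (-(k : ℝ))) atTop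

/-- `h₀ = liminf_k (-1/k) log ∫_Ω max_{C_k} μ_ω(C_k) dℙ`. -/
def h0lim {Ω : Type*} [MeasurableSpace Ω] (N : ℕ) (P : Measure Ω)
    (κ : Kernel Ω (ℕ → Fin N)) : ℝ :=
  liminf (fun k : ℕ =>
    Real.log (∫ ω, (⨆ w : Fin k → Fin N, ((κ ω) (cyl k w)).toReal) ∂P) / (-(k : ℝ))) atTop

/-- The marginal measure `μ = ∫_Ω μ_ω dℙ`, evaluated (as a real number) on a set. -/
def muBar {Ω X : Type*} [MeasurableSpace Ω] [MeasurableSpace X]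
    (P : Measure Ω) (κ : Kernel Ω X) (B : Set X) : ℝ :=
  ∫ ω, ((κ ω) B).toReal ∂P


private lemma measurable_shiftN' {A : Type*} [MeasurableSpace A] : Measurable (shiftN (A := A)) :=
  measurable_pi_lambda _ fun n => measurable_pi_apply (n + 1)

private lemma cylAlg_measurableSet {N n : ℕ} {As : Set (ℕ → Fin N)} (h : cylAlg n As) :
    MeasurableSet As := by
  obtain ⟨s, rfl⟩ := h
  exact (measurable_pi_lambda _ fun i : Fin n => measurable_pi_apply (i : ℕ))
    s.toFinite.measurableSet

private lemma me_iterate {Ω : Type*} [MeasurableSpace Ω] (θ : Ω ≃ᵐ Ω) (k : ℕ) :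
    MeasurableEmbedding ((⇑θ)^[k]) := by
  induction k with
  | zero => simpa using MeasurableEmbedding.id
  | succ k ih => rw [Function.iterate_succ]; exact ih.comp θ.measurableEmbedding

/-- If the sample measures satisfy the fibered mixing hypothesis (II), then
for all `n, g ≥ 1` and every `A ∈ F₀ⁿ(X)`:
`|μ(A ∩ σ^{−g−n}A) − μ(A)²| ≤ α(g) + |∫_Ω (μ_ω(A) − μ(A))·(μ_{θ^{n+g}ω}(A) − μ(A)) dℙ(ω)|`. -/
theorem selfcorrelation_bound
    {Ω : Type*} [MeasurableSpace Ω] {N : ℕ}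
    (P : Measure Ω) [IsProbabilityMeasure P]
    (θ : Ω ≃ᵐ Ω) (hθ : Ergodic θ P)
    (κ : Kernel Ω (ℕ → Fin N)) [IsMarkovKernel κ]
    (hequiv : ∀ᵐ ω ∂P, ∀ i : ℕ, (κ ω).map (shiftN^[i]) = κ ((⇑θ)^[i] ω))
    (αf : ℕ → ℝ)
    (hII : ∀ n m g : ℕ, 1 ≤ n → 1 ≤ m → 1 ≤ g →
      ∀ As Bs : Set (ℕ → Fin N), cylAlg n As → cylAlg m Bs →
        ∀ᵐ ω ∂P, |((κ ω) (As ∩ shiftN^[g + n] ⁻¹' Bs)).toReal -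
          ((κ ω) As).toReal * ((κ ((⇑θ)^[n + g] ω)) Bs).toReal| ≤ αf g)
    (n g : ℕ) (hn : 1 ≤ n) (hg : 1 ≤ g)
    (As : Set (ℕ → Fin N)) (hAs : cylAlg n As) :
    |muBar P κ (As ∩ shiftN^[g + n] ⁻¹' As) - (muBar P κ As) ^ 2| ≤
      αf g + |∫ ω, (((κ ω) As).toReal - muBar P κ As) *
        (((κ ((⇑θ)^[n + g] ω)) As).toReal - muBar P κ As) ∂P| := by
  have hAmeas : MeasurableSet As := cylAlg_measurableSet hAs
  have hpre : MeasurableSet (As ∩ shiftN^[g + n] ⁻¹' As) :=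
    hAmeas.inter ((measurable_shiftN'.iterate _) hAmeas)
  set c : ℝ := muBar P κ As with hc
  set a : Ω → ℝ := fun ω => ((κ ω) As).toReal with ha
  set b : Ω → ℝ := fun ω => ((κ ((⇑θ)^[n + g] ω)) As).toReal with hb
  set f : Ω → ℝ := fun ω => ((κ ω) (As ∩ shiftN^[g + n] ⁻¹' As)).toReal with hf
  have hθmp : MeasurePreserving ((⇑θ)^[n + g]) P P := hθ.toMeasurePreserving.iterate _
  have hma : Measurable a := (κ.measurable_coe hAmeas).ennreal_toReal
  have hmb : Measurable b := hma.comp hθmp.measurable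
  have hmf : Measurable f := (κ.measurable_coe hpre).ennreal_toReal
  have hbound : ∀ (ω : Ω) (S : Set (ℕ → Fin N)), |((κ ω) S).toReal| ≤ 1 := by
    intro ω S
    rw [abs_of_nonneg ENNReal.toReal_nonneg]
    simpa using ENNReal.toReal_mono ENNReal.one_ne_top prob_le_one
  have hint : ∀ h : Ω → ℝ, Measurable h → (∀ ω, |h ω| ≤ 1) → Integrable h P := by
    intro h hm hbd
    exact Integrable.mono' (integrable_const 1) hm.aestronglyMeasurable
      (ae_of_all _ fun ω => by simpa using hbd ω)
  have hia : Integrable a P := hint a hma fun ω => hbound ω As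
  have hib : Integrable b P := hint b hmb fun ω => hbound _ As
  have hiab : Integrable (fun ω => a ω * b ω) P := by
    refine hint _ (hma.mul hmb) fun ω => ?_
    calc |a ω * b ω| = |a ω| * |b ω| := abs_mul _ _
    _ ≤ 1 * 1 := mul_le_mul (hbound ω As) (hbound _ As) (abs_nonneg _) zero_le_one
    _ = 1 := one_mul 1
  have hif : Integrable f P := hint f hmf fun ω => hbound ω _
  have hIb : ∫ ω, b ω ∂P = c := by
    rw [hc, muBar, hb]
    exact hθmp.integral_comp (me_iterate θ (n + g)) fun ω => ((κ ω) As).toReal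
  have hIa : ∫ ω, a ω ∂P = c := rfl
  -- step 1 : |∫ f - ∫ a*b| ≤ αf g
  have step1 : |∫ ω, f ω ∂P - ∫ ω, a ω * b ω ∂P| ≤ αf g := by
    rw [← integral_sub hif hiab]
    have hae := hII n n g hn hn hg As As hAs hAs
    have hnorm : ∀ᵐ ω ∂P, ‖f ω - a ω * b ω‖ ≤ αf g := by
      filter_upwards [hae] with ω hω
      simpa only [Real.norm_eq_abs] using hω
    calc |∫ ω, (f ω - a ω * b ω) ∂P| ≤ αf g * (P Set.univ).toReal :=
          norm_integral_le_of_norm_le_const hnorm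
    _ = αf g := by simp
  -- step 2 : ∫ a*b - c² = ∫ (a-c)(b-c)
  have step2 : ∫ ω, (a ω - c) * (b ω - c) ∂P = ∫ ω, a ω * b ω ∂P - c ^ 2 := by
    have hexp : ∀ ω, (a ω - c) * (b ω - c) = a ω * b ω - c * a ω - c * b ω + c * c := by
      intro ω; ring
    simp only [hexp]
    have h1 : Integrable (fun ω => a ω * b ω - c * a ω) P := hiab.sub (hia.const_mul c)
    have h2 : Integrable (fun ω => a ω * b ω - c * a ω - c * b ω) P :=
      h1.sub (hib.const_mul c)
    rw [integral_add h2 (integrable_const _), integral_sub h1 (hib.const_mul c),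
      integral_sub hiab (hia.const_mul c), integral_const_mul, integral_const_mul, hIa, hIb,
      integral_const]
    simp only [measure_univ, ENNReal.toReal_one, one_smul, pow_two, probReal_univ]
    ring
  have hmu : muBar P κ (As ∩ shiftN^[g + n] ⁻¹' As) = ∫ ω, f ω ∂P := rfl
  rw [hmu]
  calc |∫ ω, f ω ∂P - c ^ 2|
      ≤ |∫ ω, f ω ∂P - ∫ ω, a ω * b ω ∂P| + |∫ ω, a ω * b ω ∂P - c ^ 2| := abs_sub_le _ _ _
    _ ≤ αf g + |∫ ω, (a ω - c) * (b ω - c) ∂P| := by rw [step2]; exact add_le_add_left step1 _
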